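/- Let ξ be an irrational which is not a rational multiple of π, and let α ∈ ℝ. Then liminf_{n→∞} (sin(nξ + α))^n = −1 and limsup_{n→∞} (sin(nξ + α))^n = 1, and the same statements hold with cos in place of sin. -/

import Mathlib

open Filter Real

/-- Rationals with small denominator that are good approximations form a finite set. -/
lemma finite_small_den (θ : ℝ) (N : ℕ) :
    {q : ℚ | |θ - q| < 1 / (q.den : ℝ) ^ 2 ∧ q.den < N}.Finite := by
  set B : ℤ := ⌈(|θ| + 1) * N⌉ with hB
  have hinj : Function.Injective (fun q : ℚ => (q.num, q.den)) := by
    intro a b hab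
    simp only [Prod.mk.injEq] at hab
    rw [← Rat.num_div_den a, ← Rat.num_div_den b, hab.1, hab.2]
  apply Set.Finite.of_finite_image (f := fun q : ℚ => (q.num, q.den)) _ hinj.injOn
  apply Set.Finite.subset ((Set.finite_Icc (-B) B).prod (Set.finite_Iio N))
  rintro ⟨n, d⟩ ⟨q, ⟨hq, hd⟩, hqe⟩
  simp only [Prod.mk.injEq] at hqe
  obtain ⟨rfl, rfl⟩ := hqe
  have hden1 : (1 : ℝ) ≤ (q.den : ℝ) := by exact_mod_cast q.pos
  have h1 : 1 / (q.den : ℝ) ^ 2 ≤ 1 := by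
    rw [div_le_one (by positivity)]; nlinarith
  have hqabs : |(q : ℝ)| ≤ |θ| + 1 := by
    have h2 : |θ - (θ - (q:ℝ))| ≤ |θ| + |θ - (q:ℝ)| := abs_sub θ (θ - (q:ℝ))
    have e : (q:ℝ) = θ - (θ - (q:ℝ)) := by ring
    rw [e]
    linarith [hq.le.trans h1]
  have hnum : |(q.num : ℝ)| ≤ (|θ| + 1) * N := by
    have hcast : (q : ℝ) = (q.num : ℝ) / (q.den : ℝ) := by
      rw [Rat.cast_def]
    have habs2 : |(q.num : ℝ)| = |(q : ℝ)| * (q.den : ℝ) := by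
      rw [hcast, abs_div, abs_of_pos (by positivity : (0:ℝ) < (q.den:ℝ))]
      field_simp
    rw [habs2]
    have hdN : (q.den : ℝ) ≤ (N : ℝ) := by exact_mod_cast hd.le
    have h0 : (0:ℝ) ≤ |θ| + 1 := by positivity
    calc |(q:ℝ)| * q.den ≤ (|θ| + 1) * q.den := by
          apply mul_le_mul_of_nonneg_right hqabs (by positivity)
      _ ≤ (|θ| + 1) * N := by apply mul_le_mul_of_nonneg_left hdN h0
  simp only [Set.mem_prod, Set.mem_Icc, Set.mem_Iio]
  refine ⟨?_, hd⟩
  have hBR : ((|θ| + 1) * N : ℝ) ≤ (B : ℝ) := Int.le_ceil _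
  have habs : |q.num| ≤ B := by
    have h3 : |((q.num : ℤ) : ℝ)| ≤ (B : ℝ) := by push_cast; exact hnum.trans hBR
    exact_mod_cast h3
  exact abs_le.mp habs

lemma exists_large_den {θ : ℝ} (hθ : Irrational θ) (N : ℕ) :
    ∃ q : ℚ, N ≤ q.den ∧ |θ - q| < 1 / (q.den : ℝ) ^ 2 := by
  have hS := Real.infinite_rat_abs_sub_lt_one_div_den_sq_of_irrational hθ
  obtain ⟨q, hq⟩ := (hS.diff (finite_small_den θ N)).nonempty
  refine ⟨q, ?_, hq.1⟩
  by_contra h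
  exact hq.2 ⟨hq.1, by omega⟩

/-- Covering lemma: given a good rational approximation p/d to θ, every γ is within 2/d
of some nθ mod 1 with 1 ≤ n ≤ d. -/
lemma exists_approx (θ γ : ℝ) (q : ℚ) (hq : |θ - q| < 1 / (q.den : ℝ) ^ 2) :
    ∃ n : ℕ, 1 ≤ n ∧ n ≤ q.den ∧ ∃ k : ℤ, |n * θ - γ - k| ≤ 2 / q.den := by
  set d : ℕ := q.den with hd
  have hd0 : 0 < d := q.pos
  have hdZ : (0:ℤ) < (d:ℤ) := by exact_mod_cast hd0
  have hcop : IsCoprime (q.num) ((d:ℤ)) := by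
    rw [Int.isCoprime_iff_gcd_eq_one]
    simpa [Int.gcd] using q.reduced
  obtain ⟨a, b, hab⟩ := hcop
  set j : ℤ := round ((d:ℝ) * γ) with hj
  set t : ℤ := (j * a) / d with ht
  set m : ℤ := (j * a) % d with hm
  have hmdef : m = j * a - d * t := Int.emod_def (j*a) d
  have hm0 : 0 ≤ m := Int.emod_nonneg _ (by exact_mod_cast hd0.ne')
  have hmlt : m < d := Int.emod_lt_of_pos _ hdZ
  have key : m * q.num = j + d * (-(j*b) - t * q.num) := by
    rw [hmdef]; linear_combination j * hab
  -- choose n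
  refine ⟨if m = 0 then d else m.toNat, ?_, ?_, ?_⟩
  · split
    · exact hd0
    · rename_i h
      have : 0 < m := lt_of_le_of_ne hm0 (Ne.symm h)
      omega
  · split
    · exact le_rfl
    · have := hmlt; omega
  · -- existence of k with n * q.num = j + d * k
    have hnk : ∃ k : ℤ, ((if m = 0 then d else m.toNat : ℕ) : ℤ) * q.num = j + d * k := by
      split
      · rename_i h
        refine ⟨-(j*b) - t * q.num + q.num, ?_⟩
        have h0 : (0:ℤ) * q.num = j + d * (-(j*b) - t * q.num) := by rw [← h]; exact key
        push_cast
        linarith [h0]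
      · refine ⟨-(j*b) - t * q.num, ?_⟩
        rw [Int.toNat_of_nonneg hm0]
        exact key
    obtain ⟨k, hk⟩ := hnk
    refine ⟨k, ?_⟩
    set n : ℕ := if m = 0 then d else m.toNat with hn
    have hnd : n ≤ d := by
      rw [hn]; split
      · exact le_rfl
      · omega
    have hdR : (0:ℝ) < (d:ℝ) := by exact_mod_cast hd0
    have hkR : (n:ℝ) * (q.num : ℝ) = (j:ℝ) + (d:ℝ) * (k:ℝ) := by exact_mod_cast hk
    have hcast : (q : ℝ) = (q.num : ℝ) / (d : ℝ) := by rw [Rat.cast_def]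
    have e1 : (n:ℝ) * θ - γ - k = (n:ℝ) * (θ - q) + ((j:ℝ)/d - γ) := by
      rw [hcast]
      field_simp
      linear_combination hkR
    rw [e1]
    have b1 : |(n:ℝ) * (θ - q)| ≤ 1 / d := by
      rw [abs_mul, abs_of_nonneg (by positivity : (0:ℝ) ≤ (n:ℝ))]
      have hnR : (n:ℝ) ≤ (d:ℝ) := by exact_mod_cast hnd
      calc (n:ℝ) * |θ - q| ≤ (d:ℝ) * (1 / (d:ℝ)^2) := by
            apply mul_le_mul hnR hq.le (abs_nonneg _) hdR.le
        _ = 1 / d := by field_simp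
    have b2 : |(j:ℝ)/d - γ| ≤ 1 / (2*d) := by
      have hr : |(d:ℝ) * γ - (j:ℝ)| ≤ 1/2 := by
        rw [hj]; exact abs_sub_round _
      have e2 : (j:ℝ)/d - γ = -(((d:ℝ) * γ - j) / d) := by field_simp; ring
      rw [e2, abs_neg, abs_div, abs_of_pos hdR]
      rw [div_le_div_iff₀ hdR (by positivity)]
      nlinarith [hr]
    calc |(n:ℝ) * (θ - q) + ((j:ℝ)/d - γ)| ≤ |(n:ℝ) * (θ - q)| + |(j:ℝ)/d - γ| := abs_add_le _ _
      _ ≤ 1/d + 1/(2*d) := add_le_add b1 b2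
      _ ≤ 2/d := by rw [div_add_div _ _ hdR.ne' (by positivity), div_le_div_iff₀ (by positivity) hdR]; ring_nf; nlinarith

/-- Key inhomogeneous approximation: for irrational θ and any γ, ε > 0, M, there is
n ≥ M with ‖nθ - γ‖ ≤ ε/√n. -/
lemma key_approx {θ : ℝ} (hθ : Irrational θ) (γ ε : ℝ) (hε : 0 < ε) (M : ℕ) :
    ∃ n : ℕ, M ≤ n ∧ ∃ k : ℤ, |n * θ - γ - k| ≤ ε / Real.sqrt n := by
  obtain ⟨q, hqden, hq⟩ := exists_large_den hθ (max M ⌈8/ε^2⌉₊ + 1)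
  set d : ℕ := q.den with hd
  have hdM : M ≤ d := by omega
  have hdε : 8 / ε^2 < (d:ℝ) := by
    have h1 : (8/ε^2 : ℝ) ≤ (⌈8/ε^2⌉₊ : ℝ) := Nat.le_ceil _
    have h2 : (⌈8/ε^2⌉₊ : ℝ) < (d : ℝ) := by exact_mod_cast (by omega : ⌈8/ε^2⌉₊ < d)
    linarith
  have hd0 : 0 < d := q.pos
  have hdR : (0:ℝ) < (d:ℝ) := by exact_mod_cast hd0
  obtain ⟨n₁, hn₁1, hn₁d, k, hk⟩ := exists_approx θ (γ - M * θ) q hq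
  refine ⟨M + n₁, by omega, k, ?_⟩
  have e1 : ((M + n₁ : ℕ):ℝ) * θ - γ - k = (n₁:ℝ) * θ - (γ - M * θ) - k := by push_cast; ring
  rw [e1]
  refine hk.trans ?_
  -- 2/d ≤ ε/√(M+n₁)
  have hnR : ((M + n₁ : ℕ):ℝ) ≤ 2 * d := by
    push_cast
    have : (M:ℝ) ≤ d := by exact_mod_cast hdM
    have : (n₁:ℝ) ≤ d := by exact_mod_cast hn₁d
    push_cast at *
    linarith
  have hsq : Real.sqrt ((M + n₁ : ℕ):ℝ) ≤ ε * d / 2 := by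
    have h1 : ((M + n₁ : ℕ):ℝ) ≤ (ε * d / 2)^2 := by
      have h2 : (2:ℝ) * d ≤ (ε * d / 2)^2 := by
        have : 8 ≤ ε^2 * d := by
          rw [div_lt_iff₀ (by positivity)] at hdε
          linarith
        nlinarith [mul_nonneg hdR.le (by linarith : (0:ℝ) ≤ ε^2*(d:ℝ) - 8)]
      linarith
    calc Real.sqrt ((M + n₁ : ℕ):ℝ) ≤ Real.sqrt ((ε * d / 2)^2) := Real.sqrt_le_sqrt h1
      _ = ε * d / 2 := Real.sqrt_sq (by positivity)
  have hsqrt_pos : 0 < Real.sqrt ((M + n₁ : ℕ):ℝ) := by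
    apply Real.sqrt_pos.mpr
    push_cast
    have : (1:ℝ) ≤ (n₁:ℝ) := by exact_mod_cast hn₁1
    positivity
  rw [div_le_div_iff₀ hdR hsqrt_pos]
  calc 2 * Real.sqrt ((M + n₁ : ℕ):ℝ) ≤ 2 * (ε * d / 2) := by linarith
    _ = ε * d := by ring

lemma cos_pow_ge (n : ℕ) (x ε : ℝ) (hx1 : |x| ≤ 1) (hx2 : (n:ℝ) * x^2 ≤ 2*ε) :
    1 - ε ≤ (Real.cos x)^n := by
  have hxx := abs_le.mp hx1
  have h0 : (0:ℝ) ≤ 1 - x^2/2 := by nlinarith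
  have h2 : (1 - x^2/2) ≤ Real.cos x := Real.one_sub_sq_div_two_le_cos
  have h3 : (1 - x^2/2)^n ≤ Real.cos x ^ n := pow_le_pow_left₀ h0 h2 n
  have h4 : 1 + (n:ℝ) * (-(x^2/2)) ≤ (1 + (-(x^2/2)))^n :=
    one_add_mul_le_pow (by nlinarith) n
  have e : (1:ℝ) + -(x^2/2) = 1 - x^2/2 := by ring
  rw [e] at h4
  nlinarith [h3, h4]

lemma sin_freq_top (ξ α : ℝ) (hξπ : Irrational (ξ / Real.pi)) (ε : ℝ) (hε : 0 < ε) :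
    ∃ᶠ n : ℕ in atTop, 1 - ε ≤ (Real.sin (n * ξ + α)) ^ n := by
  have hπ : (0:ℝ) < π := Real.pi_pos
  have hτ : Irrational (ξ / (2 * π)) := by
    have h2 : ξ / (2 * π) = (ξ / π) / ((2:ℕ):ℝ) := by
      push_cast
      rw [div_div, mul_comm]
    rw [h2]
    exact hξπ.div_natCast two_ne_zero
  set δ : ℝ := min (1/7) (Real.sqrt ε / (3*π)) with hδ
  have hδ0 : 0 < δ := lt_min (by norm_num) (by positivity)
  have hδ1 : δ ≤ 1/7 := min_le_left _ _
  have hδ2 : δ ≤ Real.sqrt ε / (3*π) := min_le_right _ _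
  have hδsq : δ^2 ≤ ε / (9*π^2) := by
    have h1 : (Real.sqrt ε / (3*π))^2 = ε / (9*π^2) := by
      rw [div_pow, Real.sq_sqrt hε.le]; ring_nf
    calc δ^2 ≤ (Real.sqrt ε / (3*π))^2 := by nlinarith [hδ0.le]
      _ = ε / (9*π^2) := h1
  rw [frequently_atTop]
  intro M₀
  obtain ⟨n, hnM, k, hk⟩ := key_approx hτ ((π/2 - α)/(2*π)) δ hδ0 (max M₀ 1)
  have hn1 : 1 ≤ n := le_trans (le_max_right _ _) hnM
  refine ⟨n, le_trans (le_max_left _ _) hnM, ?_⟩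
  set x : ℝ := n * ξ + α - π/2 - k*(2*π) with hx
  have hxe : x = 2*π*((n:ℝ) * (ξ/(2*π)) - (π/2 - α)/(2*π) - k) := by
    rw [hx]; field_simp; ring
  have hsqn : 1 ≤ Real.sqrt n := by
    rw [show (1:ℝ) = Real.sqrt 1 from (Real.sqrt_one).symm]
    exact Real.sqrt_le_sqrt (by exact_mod_cast hn1)
  have hsqn0 : 0 < Real.sqrt n := lt_of_lt_of_le one_pos hsqn
  have hxb : |x| ≤ 2*π*δ / Real.sqrt n := by
    rw [hxe, abs_mul, abs_of_pos (by positivity : (0:ℝ) < 2*π)]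
    calc 2*π*|(n:ℝ) * (ξ/(2*π)) - (π/2 - α)/(2*π) - k| ≤ 2*π*(δ / Real.sqrt n) := by
          apply mul_le_mul_of_nonneg_left hk (by positivity)
      _ = 2*π*δ / Real.sqrt n := by ring
  have hx1 : |x| ≤ 1 := by
    have hπ4 : π < 3.15 := Real.pi_lt_d2
    calc |x| ≤ 2*π*δ / Real.sqrt n := hxb
      _ ≤ 2*π*(1/7)/1 := by
          apply div_le_div₀ (by positivity) (by nlinarith) one_pos hsqn
      _ ≤ 1 := by nlinarith
  have hx2 : (n:ℝ) * x^2 ≤ 2*ε := by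
    have hxsq : x^2 ≤ (2*π*δ)^2 / n := by
      have h5 : |x|^2 ≤ (2*π*δ / Real.sqrt n)^2 := by
        apply pow_le_pow_left₀ (abs_nonneg _) hxb
      rw [sq_abs] at h5
      rw [div_pow, Real.sq_sqrt (by positivity : (0:ℝ) ≤ (n:ℝ))] at h5
      exact h5
    have hnpos : (0:ℝ) < (n:ℝ) := by exact_mod_cast hn1
    have h6 : (n:ℝ) * x^2 ≤ (2*π*δ)^2 := by
      calc (n:ℝ) * x^2 ≤ (n:ℝ) * ((2*π*δ)^2 / n) := by
            apply mul_le_mul_of_nonneg_left hxsq hnpos.le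
        _ = (2*π*δ)^2 := by field_simp
    calc (n:ℝ) * x^2 ≤ (2*π*δ)^2 := h6
      _ = 4*π^2*δ^2 := by ring
      _ ≤ 4*π^2*(ε/(9*π^2)) := by nlinarith [hδsq]
      _ ≤ 2*ε := by rw [mul_div_assoc']; rw [div_le_iff₀ (by positivity)]; nlinarith
  have hsin : Real.sin ((n:ℝ) * ξ + α) = Real.cos x := by
    have he : (n:ℝ)*ξ + α = (x + π/2) + k*(2*π) := by rw [hx]; ring
    rw [he, Real.sin_add_int_mul_two_pi, Real.sin_add_pi_div_two]
  rw [hsin]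
  exact cos_pow_ge n x ε hx1 hx2

set_option maxHeartbeats 1000000 in
lemma sin_freq_bot (ξ α : ℝ) (hξπ : Irrational (ξ / Real.pi)) (ε : ℝ) (hε : 0 < ε) :
    ∃ᶠ n : ℕ in atTop, (Real.sin (n * ξ + α)) ^ n ≤ -1 + ε := by
  have hπ : (0:ℝ) < π := Real.pi_pos
  set δ : ℝ := min (1/7) (Real.sqrt ε / (4*π)) with hδ
  have hδ0 : 0 < δ := lt_min (by norm_num) (by positivity)
  have hδ1 : δ ≤ 1/7 := min_le_left _ _
  have hδ2 : δ ≤ Real.sqrt ε / (4*π) := min_le_right _ _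
  have hδsq : δ^2 ≤ ε / (16*π^2) := by
    have h1 : (Real.sqrt ε / (4*π))^2 = ε / (16*π^2) := by
      rw [div_pow, Real.sq_sqrt hε.le]; ring_nf
    calc δ^2 ≤ (Real.sqrt ε / (4*π))^2 := by nlinarith [hδ0.le]
      _ = ε / (16*π^2) := h1
  rw [frequently_atTop]
  intro M₀
  obtain ⟨m, hmM, k, hk⟩ := key_approx hξπ ((-(π/2) - ξ - α)/(2*π)) δ hδ0 (max M₀ 1)
  have hm1 : 1 ≤ m := le_trans (le_max_right _ _) hmM
  refine ⟨2*m+1, by omega, ?_⟩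
  set n : ℕ := 2*m+1 with hn
  set x : ℝ := n * ξ + α + π/2 - k*(2*π) with hx
  have hxe : x = 2*π*((m:ℝ) * (ξ/π) - (-(π/2) - ξ - α)/(2*π) - k) := by
    rw [hx, hn]; push_cast; field_simp; ring
  have hsqm : 1 ≤ Real.sqrt m := by
    rw [show (1:ℝ) = Real.sqrt 1 from (Real.sqrt_one).symm]
    exact Real.sqrt_le_sqrt (by exact_mod_cast hm1)
  have hsqm0 : 0 < Real.sqrt m := lt_of_lt_of_le one_pos hsqm
  have hxb : |x| ≤ 2*π*δ / Real.sqrt m := by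
    rw [hxe, abs_mul, abs_of_pos (by positivity : (0:ℝ) < 2*π)]
    calc 2*π*|(m:ℝ) * (ξ/π) - (-(π/2) - ξ - α)/(2*π) - k| ≤ 2*π*(δ / Real.sqrt m) := by
          apply mul_le_mul_of_nonneg_left hk (by positivity)
      _ = 2*π*δ / Real.sqrt m := by ring
  have hx1 : |x| ≤ 1 := by
    have hπ4 : π < 3.15 := Real.pi_lt_d2
    calc |x| ≤ 2*π*δ / Real.sqrt m := hxb
      _ ≤ 2*π*(1/7)/1 := by
          apply div_le_div₀ (by positivity) (by nlinarith) one_pos hsqm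
      _ ≤ 1 := by nlinarith
  have hx2 : (n:ℝ) * x^2 ≤ 2*ε := by
    have hxsq : x^2 ≤ (2*π*δ)^2 / m := by
      have h5 : |x|^2 ≤ (2*π*δ / Real.sqrt m)^2 := by
        apply pow_le_pow_left₀ (abs_nonneg _) hxb
      rw [sq_abs] at h5
      rw [div_pow, Real.sq_sqrt (by positivity : (0:ℝ) ≤ (m:ℝ))] at h5
      exact h5
    have hmpos : (0:ℝ) < (m:ℝ) := by exact_mod_cast hm1
    have hnm : (n:ℝ) ≤ 4*m := by
      rw [hn]; push_cast
      have : (1:ℝ) ≤ (m:ℝ) := by exact_mod_cast hm1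
      linarith
    have h7 : x^2 * m ≤ (2*π*δ)^2 := (le_div_iff₀ hmpos).mp hxsq
    have h8 : δ^2 * (16*π^2) ≤ ε := (le_div_iff₀ (by positivity)).mp hδsq
    have h9 : (n:ℝ)*x^2 ≤ 4*(m:ℝ)*x^2 := mul_le_mul_of_nonneg_right hnm (sq_nonneg x)
    nlinarith [h7, h8, h9]
  have hsin : Real.sin ((n:ℝ) * ξ + α) = -Real.cos x := by
    have he : (n:ℝ)*ξ + α = (x - π/2) + k*(2*π) := by rw [hx]; ring
    rw [he, Real.sin_add_int_mul_two_pi, Real.sin_sub_pi_div_two]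
  rw [hsin]
  have hodd : Odd n := ⟨m, by omega⟩
  rw [hodd.neg_pow]
  have := cos_pow_ge n x ε hx1 hx2
  linarith

lemma sin_main (ξ α : ℝ) (hξπ : Irrational (ξ / Real.pi)) :
    liminf (fun n : ℕ => (Real.sin (n * ξ + α)) ^ n) atTop = -1 ∧
    limsup (fun n : ℕ => (Real.sin (n * ξ + α)) ^ n) atTop = 1 := by
  set u : ℕ → ℝ := fun n => (Real.sin (n * ξ + α)) ^ n with hu
  have habs : ∀ n, |u n| ≤ 1 := by
    intro n
    rw [hu]
    simp only
    rw [abs_pow]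
    exact pow_le_one₀ (abs_nonneg _) (Real.abs_sin_le_one _)
  have hub : ∀ n, u n ≤ 1 := fun n => (abs_le.mp (habs n)).2
  have hlb : ∀ n, -1 ≤ u n := fun n => (abs_le.mp (habs n)).1
  have hbdd : IsBoundedUnder (· ≤ ·) atTop u := isBoundedUnder_of ⟨1, hub⟩
  have hbdd' : IsBoundedUnder (· ≥ ·) atTop u := isBoundedUnder_of ⟨-1, hlb⟩
  have hcob : IsCoboundedUnder (· ≤ ·) atTop u := hbdd'.isCoboundedUnder_le
  have hcob' : IsCoboundedUnder (· ≥ ·) atTop u := hbdd.isCoboundedUnder_ge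
  constructor
  · apply le_antisymm
    · have h1 : ∀ ε : ℝ, 0 < ε → liminf u atTop ≤ -1 + ε := fun ε hε =>
        liminf_le_of_frequently_le (sin_freq_bot ξ α hξπ ε hε) hbdd'
      by_contra h
      push_neg at h
      have := h1 ((liminf u atTop - (-1))/2) (by linarith)
      linarith
    · exact le_liminf_of_le hcob' (Eventually.of_forall hlb)
  · apply le_antisymm
    · exact limsup_le_of_le hcob (Eventually.of_forall hub)
    · have h1 : ∀ ε : ℝ, 0 < ε → 1 - ε ≤ limsup u atTop := fun ε hε =>
        le_limsup_of_frequently_le (sin_freq_top ξ α hξπ ε hε) hbdd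
      by_contra h
      push_neg at h
      have := h1 ((1 - limsup u atTop)/2) (by linarith)
      linarith

/-- If ξ is irrational and not a rational multiple of π, then for any α,
liminf (sin(nξ+α))ⁿ = −1, limsup (sin(nξ+α))ⁿ = 1, and similarly for cos. -/
theorem liminf_limsup_sin_cos_pow
    (ξ α : ℝ) (hξ : Irrational ξ) (hξπ : Irrational (ξ / Real.pi)) :
    liminf (fun n : ℕ => (Real.sin (n * ξ + α)) ^ n) atTop = -1 ∧
    liminf (fun n : ℕ => (Real.cos (n * ξ + α)) ^ n) atTop = -1 ∧
    limsup (fun n : ℕ => (Real.sin (n * ξ + α)) ^ n) atTop = 1 ∧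
    limsup (fun n : ℕ => (Real.cos (n * ξ + α)) ^ n) atTop = 1 := by
  obtain ⟨hs1, hs2⟩ := sin_main ξ α hξπ
  obtain ⟨hc1, hc2⟩ := sin_main ξ (α + Real.pi/2) hξπ
  have he : (fun n : ℕ => (Real.cos (n * ξ + α)) ^ n) =
      (fun n : ℕ => (Real.sin (n * ξ + (α + Real.pi/2))) ^ n) := by
    funext n
    congr 1
    rw [show (n:ℝ) * ξ + (α + Real.pi/2) = ((n:ℝ) * ξ + α) + Real.pi/2 by ring,
      Real.sin_add_pi_div_two]
  rw [he]
  exact ⟨hs1, hc1, hs2, hc2⟩
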